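/- The constant 1/2 in the upper bound of the generalised trapezoid inequality for convex functions is sharp: for every constant D < 1/2 there exist real numbers a < b, a convex function f : [a,b] → ℝ with finite one-sided derivatives f′₊(a), f′₋(b), and a point x ∈ [a,b] such that (x−a)·f(a) + (b−x)·f(b) − ∫_a^b f(t) dt > D·[ (b−x)²·f′₋(b) − (x−a)²·f′₊(a) ]. (Indeed f(t) = |t − (a+b)/2| and x = (a+b)/2 witness this.) -/

import Mathlib

open MeasureTheory Set intervalIntegral

/-- **Sharpness of the constant `1/2`** in the upper bound of the generalised
trapezoid inequality for convex functions: no constant `D < 1/2` works. -/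
theorem trapezoid_convex_upper_bound_sharp (D : ℝ) (hD : D < 1 / 2) :
    ∃ a b : ℝ, a < b ∧ ∃ f : ℝ → ℝ, ConvexOn ℝ (Set.Icc a b) f ∧
      ∃ A B : ℝ,
        HasDerivWithinAt f A (Set.Ici a) a ∧
        HasDerivWithinAt f B (Set.Iic b) b ∧
        ∃ x ∈ Set.Icc a b,
          (x - a) * f a + (b - x) * f b - (∫ t in a..b, f t) >
            D * ((b - x) ^ 2 * B - (x - a) ^ 2 * A) := by
  refine ⟨-1, 1, by norm_num, fun t => |t|, (by exact (convexOn_norm (convex_Icc (-1:ℝ) 1))), -1, 1, ?_, ?_, 0, by norm_num, ?_⟩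
  · have h : HasDerivWithinAt (fun t : ℝ => -t) (-1) (Set.Ici (-1 : ℝ)) (-1) := by
      exact (hasDerivAt_neg (-1 : ℝ)).hasDerivWithinAt
    refine h.congr_of_eventuallyEq ?_ (by norm_num)
    filter_upwards [nhdsWithin_le_nhds (Iio_mem_nhds (by norm_num : (-1 : ℝ) < 0))] with t ht
    exact abs_of_neg ht
  · have h : HasDerivWithinAt (fun t : ℝ => t) 1 (Set.Iic (1 : ℝ)) 1 := (hasDerivAt_id _).hasDerivWithinAt
    refine h.congr_of_eventuallyEq ?_ (by norm_num)
    filter_upwards [nhdsWithin_le_nhds (Ioi_mem_nhds (by norm_num : (0 : ℝ) < 1))] with t ht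
    exact abs_of_pos ht
  · have hint : (∫ t in (-1 : ℝ)..1, |t|) = 1 := by
      rw [← intervalIntegral.integral_add_adjacent_intervals (b := 0)
        intervalIntegrable_id.abs intervalIntegrable_id.abs]
      have h1 : (∫ t in (-1 : ℝ)..0, |t|) = ∫ t in (-1 : ℝ)..0, -t := by
        apply intervalIntegral.integral_congr
        intro t ht
        rw [uIcc_of_le (by norm_num)] at ht
        rcases eq_or_lt_of_le ht.2 with h | h
        · simp [h]
        · exact abs_of_neg h
      have h2 : (∫ t in (0 : ℝ)..1, |t|) = ∫ t in (0 : ℝ)..1, t := by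
        apply intervalIntegral.integral_congr
        intro t ht
        rw [uIcc_of_le (by norm_num)] at ht
        exact abs_of_nonneg ht.1
      rw [h1, h2, intervalIntegral.integral_neg, integral_id, integral_id]
      norm_num
    simp only [hint]
    norm_num
    linarith
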